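/- Let n ≥ 1 and let μ, μ' be dominant words over {1,…,n}. Let j^(1) > j^(2) > ⋯ > j^(s) be the distinct segments occurring in the canonical factorizations of μ and μ', listed in decreasing lexicographic order, and let m_1,…,m_s and m'_1,…,m'_s be the (possibly zero) multiplicities with which they occur in the canonical factorizations of μ and μ' respectively, so that μ = (j^(1))^{m_1}⋯(j^(s))^{m_s} and μ' = (j^(1))^{m'_1}⋯(j^(s))^{m'_s} as concatenations. Then the lexicographically greatest shuffle of μ and μ' is the concatenation (j^(1))^{m_1+m'_1}(j^(2))^{m_2+m'_2}⋯(j^(s))^{m_s+m'_s}. -/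

import Mathlib

/-- `IsShuffle u v w` : the word `w` is a shuffle (interleaving) of the words `u` and `v`. -/
inductive IsShuffle : List ℕ → List ℕ → List ℕ → Prop
  | nil : IsShuffle [] [] []
  | left (a : ℕ) {u v w : List ℕ} : IsShuffle u v w → IsShuffle (a :: u) v (a :: w)
  | right (a : ℕ) {u v w : List ℕ} : IsShuffle u v w → IsShuffle u (a :: v) (a :: w)

/-- The segment ⟨k,l⟩, i.e. the word (k, k+1, …, l). -/
def segWord (k l : ℕ) : List ℕ := List.range' k (l + 1 - k)

/-- `w` is a segment of the alphabet {1,…,n}. -/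
def IsSegment (n : ℕ) (w : List ℕ) : Prop :=
  ∃ k l : ℕ, 1 ≤ k ∧ k ≤ l ∧ l ≤ n ∧ w = segWord k l

/-- Concatenation `(j^(1))^{m_1} (j^(2))^{m_2} ⋯ (j^(s))^{m_s}` of the words of `js`,
each repeated with the corresponding multiplicity from `ms`. -/
def glueWord (js : List (List ℕ)) (ms : List ℕ) : List ℕ :=
  ((js.zip ms).map fun p => (List.replicate p.2 p.1).flatten).flatten

namespace MaxShAux

lemma cons_lt_cons' {a : ℕ} {u v : List ℕ} (h : u < v) : a::u < a::v := List.Lex.cons h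

lemma lt_of_cons_lt_cons {a : ℕ} {u v : List ℕ} (h : a::u < a::v) : u < v := by
  cases h with
  | cons h => exact h
  | rel h => exact absurd h (lt_irrefl a)

lemma append_le_append_left (t : List ℕ) {u v : List ℕ} (h : u ≤ v) : t ++ u ≤ t ++ v := by
  rcases lt_or_eq_of_le h with h' | rfl
  · exact le_of_lt (List.Lex.append_left _ h' t)
  · exact le_rfl

-- shuffle basics
lemma shuffle_nil_left : ∀ {v : List ℕ}, IsShuffle [] v v
  | [] => .nil
  | _::_ => .right _ shuffle_nil_left

lemma shuffle_nil_right : ∀ {u : List ℕ}, IsShuffle u [] u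
  | [] => .nil
  | _::_ => .left _ shuffle_nil_right

lemma shuffle_symm {u v w : List ℕ} (h : IsShuffle u v w) : IsShuffle v u w := by
  induction h with
  | nil => exact .nil
  | left a _ ih => exact .right a ih
  | right a _ ih => exact .left a ih

lemma shuffle_append {u v w u' v' w' : List ℕ} (h : IsShuffle u v w) (h' : IsShuffle u' v' w') :
    IsShuffle (u ++ u') (v ++ v') (w ++ w') := by
  induction h with
  | nil => exact h'
  | left a _ ih => exact .left a ih
  | right a _ ih => exact .right a ih

lemma shuffle_cases {u v w : List ℕ} (h : IsShuffle u v w) :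
    (u = [] ∧ v = [] ∧ w = []) ∨
    (∃ a u' w', u = a::u' ∧ w = a::w' ∧ IsShuffle u' v w') ∨
    (∃ a v' w', v = a::v' ∧ w = a::w' ∧ IsShuffle u v' w') := by
  cases h with
  | nil => exact Or.inl ⟨rfl, rfl, rfl⟩
  | left a h => exact Or.inr (Or.inl ⟨a, _, _, rfl, rfl, h⟩)
  | right a h => exact Or.inr (Or.inr ⟨a, _, _, rfl, rfl, h⟩)

lemma shuffle_nil_inv {u v : List ℕ} (h : IsShuffle u v []) : u = [] ∧ v = [] := by
  cases h; exact ⟨rfl, rfl⟩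

-- glue basics
lemma glue_nil (ms : List ℕ) : glueWord [] ms = [] := rfl

lemma glue_cons (j : List ℕ) (js : List (List ℕ)) (m : ℕ) (ms : List ℕ) :
    glueWord (j::js) (m::ms) = (List.replicate m j).flatten ++ glueWord js ms := by
  simp [glueWord]

lemma glue_cons_zero (j : List ℕ) (js : List (List ℕ)) (ms : List ℕ) :
    glueWord (j::js) (0::ms) = glueWord js ms := by
  simp [glue_cons]

lemma glue_cons_succ (j : List ℕ) (js : List (List ℕ)) (m : ℕ) (ms : List ℕ) :
    glueWord (j::js) ((m+1)::ms) = j ++ glueWord (j::js) (m::ms) := by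
  rw [glue_cons, glue_cons, List.replicate_succ, List.flatten_cons, List.append_assoc]

-- segWord basics
lemma segWord_cons {k l : ℕ} (h : k ≤ l) : segWord k l = k :: segWord (k+1) l := by
  unfold segWord
  have h1 : l + 1 - k = (l - k) + 1 := by omega
  have h2 : l + 1 - (k+1) = l - k := by omega
  rw [h1, h2, List.range'_succ]

lemma segWord_nil {k l : ℕ} (h : l < k) : segWord k l = [] := by
  unfold segWord
  have : l + 1 - k = 0 := by omega
  rw [this]; rfl

lemma segWord_ne_nil {k l : ℕ} (h : k ≤ l) : segWord k l ≠ [] := by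
  rw [segWord_cons h]; simp

lemma segWord_split {k b l : ℕ} (h1 : k ≤ b + 1) (h2 : b ≤ l) :
    segWord k l = segWord k b ++ segWord (b+1) l := by
  have h : List.range' k (b+1-k) 1 ++ List.range' (k + 1*(b+1-k)) (l-b) 1 = List.range' k ((b+1-k) + (l-b)) 1 := List.range'_append
  have e1 : k + 1*(b+1-k) = b+1 := by omega
  have e2 : (b+1-k) + (l - b) = l+1-k := by omega
  have e3 : l + 1 - (b+1) = l - b := by omega
  unfold segWord
  rw [e1, e2] at h
  rw [e3, ← h]

lemma lt_of_segWord_lt : ∀ (fuel i b l : ℕ), b + 1 - i = fuel →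
    segWord i b < segWord i l → b < l := by
  intro fuel
  induction fuel with
  | zero =>
    intro i b l hf h
    rw [segWord_nil (by omega)] at h
    by_contra hl
    rw [segWord_nil (by omega)] at h
    exact lt_irrefl _ h
  | succ fuel ih =>
    intro i b l hf h
    have hib : i ≤ b := by omega
    rw [segWord_cons hib] at h
    rcases le_or_gt i l with hil | hli
    · rw [segWord_cons hil] at h
      exact ih (i+1) b l (by omega) (lt_of_cons_lt_cons h)
    · rw [segWord_nil hli] at h
      cases h

lemma glue_head_mem : ∀ (js : List (List ℕ)) (ms : List ℕ) {x : ℕ} {r : List ℕ},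
    (∀ j' ∈ js, j' ≠ []) → glueWord js ms = x :: r → ∃ j' ∈ js, ∃ t, j' = x :: t := by
  intro js
  induction js with
  | nil => intro ms x r _ h; simp [glueWord] at h
  | cons j tjs ih =>
    intro ms x r hne h
    cases ms with
    | nil => simp [glueWord] at h
    | cons m msr =>
      cases m with
      | zero =>
        rw [glue_cons_zero] at h
        obtain ⟨j', hj, ht⟩ := ih msr (fun j' hj' => hne j' (List.mem_cons_of_mem _ hj')) h
        exact ⟨j', List.mem_cons_of_mem _ hj, ht⟩
      | succ m =>
        rw [glue_cons_succ] at h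
        obtain ⟨a, t, rfl⟩ := List.exists_cons_of_ne_nil (hne j (List.mem_cons_self))
        rw [List.cons_append] at h
        injection h with h1 h2
        exact ⟨a :: t, List.mem_cons_self, t, by rw [h1]⟩

lemma glue_decomp : ∀ (js : List (List ℕ)) (ms : List ℕ), ms.length = js.length →
    glueWord js ms = [] ∨ ∃ j' ms₂, j' ∈ js ∧ ms₂.length = js.length ∧
      glueWord js ms = j' ++ glueWord js ms₂ := by
  intro js
  induction js with
  | nil => intro ms _; exact Or.inl rfl
  | cons j tjs ih =>
    intro ms hlen
    cases ms with
    | nil => simp at hlen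
    | cons m msr =>
      cases m with
      | zero =>
        rcases ih msr (by simpa using hlen) with hnil | ⟨j', ms₂, hmem, hl2, hdec⟩
        · exact Or.inl (by rw [glue_cons_zero, hnil])
        · refine Or.inr ⟨j', 0::ms₂, List.mem_cons_of_mem _ hmem, by simp [hl2], ?_⟩
          rw [glue_cons_zero, glue_cons_zero, hdec]
      | succ m =>
        refine Or.inr ⟨j, m::msr, List.mem_cons_self, by simpa using hlen, ?_⟩
        exact glue_cons_succ j tjs m msr

lemma glue_pos_ne_nil {k l : ℕ} (hkl : k ≤ l) (tjs : List (List ℕ)) {m : ℕ} (hm : 1 ≤ m)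
    (ms : List ℕ) : glueWord (segWord k l :: tjs) (m::ms) ≠ [] := by
  have : m = (m-1)+1 := by omega
  rw [this, glue_cons_succ]
  intro h
  rcases List.append_eq_nil_iff.mp h with ⟨h1, _⟩
  exact segWord_ne_nil hkl h1

lemma eat : ∀ (fuel i l : ℕ) (u v w : List ℕ), l + 1 - i = fuel →
    IsShuffle (segWord i l ++ u) v w → (∀ y t, v = y :: t → y < i) →
    (∃ w₂, w = segWord i l ++ w₂ ∧ IsShuffle u v w₂) ∨ (∀ z, w < segWord i l ++ z) := by
  intro fuel
  induction fuel with
  | zero =>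
    intro i l u v w hf hw _
    rw [segWord_nil (by omega)] at hw ⊢
    exact Or.inl ⟨w, rfl, hw⟩
  | succ fuel ih =>
    intro i l u v w hf hw hv
    have hil : i ≤ l := by omega
    rw [segWord_cons hil, List.cons_append] at hw
    rcases shuffle_cases hw with ⟨h1, _, _⟩ | ⟨a, u', w', hu, hwe, h⟩ | ⟨a, v', w', hve, hwe, h⟩
    · simp at h1
    · injection hu with ha hu'
      subst ha; subst hwe
      rw [← hu'] at h
      rcases ih (i+1) l u v w' (by omega) h
          (fun y t hyt => Nat.lt_succ_of_lt (hv y t hyt)) with ⟨w₂, rfl, hs⟩ | hstrict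
      · exact Or.inl ⟨w₂, by rw [segWord_cons hil, List.cons_append], hs⟩
      · refine Or.inr fun z => ?_
        rw [segWord_cons hil, List.cons_append]
        exact cons_lt_cons' (hstrict z)
    · subst hwe
      refine Or.inr fun z => ?_
      rw [segWord_cons hil, List.cons_append]
      exact List.Lex.rel (hv a v' hve)
lemma leftstep (k l : ℕ) (tjs : List (List ℕ)) (m m' : ℕ) (msr msr' : List ℕ)
    (hkl : k ≤ l)
    (hseg : ∀ w ∈ tjs, ∃ a b : ℕ, a ≤ b ∧ w = segWord a b)
    (hpw : List.Pairwise (· > ·) (segWord k l :: tjs))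
    (h1 : msr.length = tjs.length)
    (hsum : 1 ≤ m + m')
    (hIH : 1 ≤ m → ∀ w, IsShuffle (glueWord (segWord k l :: tjs) ((m-1)::msr))
        (glueWord (segWord k l :: tjs) (m'::msr')) w →
        w ≤ glueWord (segWord k l :: tjs) (((m-1)+m') :: List.zipWith (· + ·) msr msr'))
    {x : ℕ} {Ut w' : List ℕ}
    (hU : glueWord (segWord k l :: tjs) (m::msr) = x :: Ut)
    (hw' : IsShuffle Ut (glueWord (segWord k l :: tjs) (m'::msr')) w') :
    x :: w' ≤ glueWord (segWord k l :: tjs) ((m+m') :: List.zipWith (· + ·) msr msr') := by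
  obtain ⟨p, hp⟩ : ∃ p, m + m' = p + 1 := ⟨m+m'-1, by omega⟩
  rw [hp, glue_cons_succ]
  have hne : ∀ j' ∈ segWord k l :: tjs, j' ≠ [] := by
    intro j' hj'
    rcases List.mem_cons.mp hj' with rfl | hmem
    · exact segWord_ne_nil hkl
    · obtain ⟨a, b, hab, rfl⟩ := hseg j' hmem; exact segWord_ne_nil hab
  have hall : ∀ j' ∈ segWord k l :: tjs, ∀ y t, j' = y :: t → y ≤ k := by
    intro j' hj' y t hjt
    rcases List.mem_cons.mp hj' with rfl | hmem
    · rw [segWord_cons hkl] at hjt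
      injection hjt with h _
      exact le_of_eq h.symm
    · have hlt : j' < segWord k l := List.rel_of_pairwise_cons hpw hmem
      subst hjt
      rw [segWord_cons hkl] at hlt
      exact List.head_le_of_lt hlt
  have hVhead : ∀ (ms₀ : List ℕ) (y : ℕ) (t : List ℕ),
      glueWord (segWord k l :: tjs) ms₀ = y :: t → y ≤ k := by
    intro ms₀ y t h
    obtain ⟨j', hj', t', ht'⟩ := glue_head_mem _ ms₀ hne h
    exact hall j' hj' y t' ht'
  set R := glueWord (segWord k l :: tjs) (p :: List.zipWith (· + ·) msr msr') with hR
  rcases Nat.eq_zero_or_pos m with rfl | hm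
  · -- m = 0, so m' ≥ 1
    have hm' : 1 ≤ m' := by omega
    rw [glue_cons_zero] at hU
    rcases glue_decomp tjs msr h1 with hnil | ⟨j', ms₂, hmem, hl2, hdec⟩
    · rw [hnil] at hU; cases hU
    · obtain ⟨a, b, hab, rfl⟩ := hseg j' hmem
      rw [hdec] at hU
      set U2 := glueWord tjs ms₂ with hU2
      rw [segWord_cons hab, List.cons_append] at hU
      injection hU with hax hUt
      subst hax
      have hja : segWord a b < segWord k l := List.rel_of_pairwise_cons hpw hmem
      have hak : a ≤ k := by
        have h2 := hja
        rw [segWord_cons hkl, segWord_cons hab] at h2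
        exact List.head_le_of_lt h2
      rcases lt_or_eq_of_le hak with hlt | rfl
      · rw [segWord_cons hkl, List.cons_append]
        exact le_of_lt (List.Lex.rel hlt)
      · -- a = k
        have hbl : b < l := lt_of_segWord_lt (b+1-a) a b l rfl hja
        rw [← hUt] at hw'
        rcases eat (b - a) (a+1) b _ _ w' (by omega) hw'
            (fun y t hyt => Nat.lt_succ_of_le (hVhead _ y t hyt)) with ⟨w₂, rfl, hs⟩ | hstrict
        · have hVne : glueWord (segWord a l :: tjs) (m'::msr') ≠ [] :=
            glue_pos_ne_nil hkl tjs hm' msr'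
          have hw₂ne : w₂ ≠ [] := by
            intro h; subst h
            exact hVne (shuffle_nil_inv hs).2
          obtain ⟨y, w₃, rfl⟩ := List.exists_cons_of_ne_nil hw₂ne
          have hy : y ≤ a := by
            rcases shuffle_cases hs with ⟨_, _, h0⟩ | ⟨c, u', wx, hu, hwe, _⟩ | ⟨c, v', wx, hvv, hwe, _⟩
            · simp at h0
            · injection hwe with hyc _
              rw [hU2] at hu
              obtain ⟨j'', hj'', t'', ht''⟩ :=
                glue_head_mem tjs ms₂ (fun j hj => hne j (List.mem_cons_of_mem _ hj)) hu
              rw [hyc]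
              exact hall j'' (List.mem_cons_of_mem _ hj'') c t'' ht''
            · injection hwe with hyc _
              rw [hyc]
              exact hVhead _ c v' hvv
          rw [segWord_cons hkl, List.cons_append]
          apply le_of_lt
          apply cons_lt_cons'
          rw [segWord_split (show a+1 ≤ b+1 by omega) (le_of_lt hbl), List.append_assoc]
          apply List.Lex.append_left
          rw [segWord_cons (show b+1 ≤ l by omega), List.cons_append]
          exact List.Lex.rel (by omega : y < b+1)
        · rw [segWord_cons hkl, List.cons_append]
          apply le_of_lt
          apply cons_lt_cons'
          rw [segWord_split (show a+1 ≤ b+1 by omega) (le_of_lt hbl), List.append_assoc]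
          exact hstrict _
  · -- m ≥ 1
    obtain ⟨q, hq⟩ : ∃ q, m = q + 1 := ⟨m-1, by omega⟩
    have hm1 : m - 1 = q := by omega
    rw [hm1] at hIH
    rw [hq, glue_cons_succ] at hU
    set U1 := glueWord (segWord k l :: tjs) (q::msr) with hU1
    rw [segWord_cons hkl, List.cons_append] at hU
    injection hU with hkx hUt
    subst hkx
    rw [← hUt] at hw'
    rcases eat (l - k) (k+1) l _ _ w' (by omega) hw'
        (fun y t hyt => Nat.lt_succ_of_le (hVhead _ y t hyt)) with ⟨w₂, rfl, hs⟩ | hstrict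
    · rw [hU1] at hs
      have hb := hIH (by omega) w₂ hs
      have hqp : q + m' = p := by omega
      rw [hqp, ← hR] at hb
      rw [segWord_cons hkl, List.cons_append]
      exact List.cons_le_cons _ (append_le_append_left _ hb)
    · rw [segWord_cons hkl, List.cons_append]
      exact le_of_lt (cons_lt_cons' (hstrict _))
lemma segWord_length (k l : ℕ) : (segWord k l).length = l + 1 - k := by
  simp [segWord]

lemma bound : ∀ (N : ℕ) (js : List (List ℕ)) (ms ms' : List ℕ),
    (glueWord js ms).length + (glueWord js ms').length + js.length ≤ N →
    (∀ w ∈ js, ∃ a b : ℕ, a ≤ b ∧ w = segWord a b) →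
    List.Pairwise (· > ·) js →
    ms.length = js.length → ms'.length = js.length →
    ∀ w, IsShuffle (glueWord js ms) (glueWord js ms') w →
    w ≤ glueWord js (List.zipWith (· + ·) ms ms') := by
  intro N
  induction N with
  | zero =>
    intro js ms ms' hN hseg hpw h1 h2 w hw
    cases js with
    | nil =>
      rw [glue_nil] at hw
      rw [glue_nil] at hw
      cases hw
      rw [glue_nil]
    | cons j tjs => simp at hN
  | succ N ih =>
    intro js ms ms' hN hseg hpw h1 h2 w hw
    cases js with
    | nil =>
      rw [glue_nil] at hw
      rw [glue_nil] at hw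
      cases hw
      rw [glue_nil]
    | cons j tjs =>
      cases ms with
      | nil => simp at h1
      | cons m msr =>
        cases ms' with
        | nil => simp at h2
        | cons m' msr' =>
          obtain ⟨k, l, hkl, rfl⟩ := hseg j (List.mem_cons_self)
          have hsegt : ∀ w ∈ tjs, ∃ a b : ℕ, a ≤ b ∧ w = segWord a b :=
            fun w hw => hseg w (List.mem_cons_of_mem _ hw)
          have h1' : msr.length = tjs.length := by simpa using h1
          have h2' : msr'.length = tjs.length := by simpa using h2
          rw [List.zipWith_cons_cons]
          by_cases hmm : m = 0 ∧ m' = 0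
          · obtain ⟨rfl, rfl⟩ := hmm
            rw [glue_cons_zero] at hw
            rw [glue_cons_zero] at hw
            rw [show (0:ℕ) + 0 = 0 from rfl, glue_cons_zero]
            refine ih tjs msr msr' ?_ hsegt hpw.of_cons h1' h2' w hw
            rw [glue_cons_zero, glue_cons_zero, List.length_cons] at hN
            omega
          · have hsum : 1 ≤ m + m' := by omega
            have hkllen : 1 ≤ (segWord k l).length := by rw [segWord_length]; omega
            rcases shuffle_cases hw with ⟨hU0, hV0, _⟩ | ⟨x, Ut, w', hU, rfl, hw'⟩ |
                ⟨x, Vt, w', hV, rfl, hw'⟩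
            · exfalso
              rcases Nat.eq_zero_or_pos m with rfl | hm
              · exact glue_pos_ne_nil hkl tjs (by omega) msr' hV0
              · exact glue_pos_ne_nil hkl tjs hm msr hU0
            · refine leftstep k l tjs m m' msr msr' hkl hsegt hpw h1' hsum ?_ hU hw'
              intro hm w₂ hs
              obtain ⟨q, rfl⟩ : ∃ q, m = q + 1 := ⟨m - 1, by omega⟩
              simp only [Nat.add_sub_cancel] at hs ⊢
              have hlq : (glueWord (segWord k l :: tjs) ((q+1)::msr)).length =
                  (segWord k l).length + (glueWord (segWord k l :: tjs) (q::msr)).length := by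
                rw [glue_cons_succ, List.length_append]
              have := ih (segWord k l :: tjs) (q::msr) (m'::msr') (by omega) hseg hpw
                (by simpa using h1') (by simpa using h2') w₂ hs
              rw [List.zipWith_cons_cons] at this
              exact this
            · have hw'' := shuffle_symm hw'
              have hmain := leftstep k l tjs m' m msr' msr hkl hsegt hpw h2' (by omega) ?_ hV hw''
              · rw [Nat.add_comm m' m, List.zipWith_comm_of_comm Nat.add_comm] at hmain
                exact hmain
              intro hm' w₂ hs
              obtain ⟨q, rfl⟩ : ∃ q, m' = q + 1 := ⟨m' - 1, by omega⟩
              simp only [Nat.add_sub_cancel] at hs ⊢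
              have hlq : (glueWord (segWord k l :: tjs) ((q+1)::msr')).length =
                  (segWord k l).length + (glueWord (segWord k l :: tjs) (q::msr')).length := by
                rw [glue_cons_succ, List.length_append]
              have := ih (segWord k l :: tjs) (q::msr') (m::msr) (by omega) hseg hpw
                (by simpa using h2') (by simpa using h1') w₂ hs
              rw [List.zipWith_cons_cons] at this
              exact this

lemma mem_part : ∀ (js : List (List ℕ)) (ms ms' : List ℕ),
    ms.length = js.length → ms'.length = js.length →
    IsShuffle (glueWord js ms) (glueWord js ms')
      (glueWord js (List.zipWith (· + ·) ms ms')) := by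
  intro js
  induction js with
  | nil => intro ms ms' _ _; exact IsShuffle.nil
  | cons j tjs ih =>
    intro ms ms' h1 h2
    cases ms with
    | nil => simp at h1
    | cons m msr =>
      cases ms' with
      | nil => simp at h2
      | cons m' msr' =>
        rw [List.zipWith_cons_cons, glue_cons, glue_cons, glue_cons]
        have hrep : (List.replicate (m+m') j).flatten =
            (List.replicate m j).flatten ++ (List.replicate m' j).flatten := by
          rw [List.replicate_add, List.flatten_append]
        rw [hrep]
        have hA : IsShuffle ((List.replicate m j).flatten) []
            ((List.replicate m j).flatten) := shuffle_nil_right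
        have hB : IsShuffle [] ((List.replicate m' j).flatten)
            ((List.replicate m' j).flatten) := shuffle_nil_left
        have hAB := shuffle_append hA hB
        rw [List.append_nil, List.nil_append] at hAB
        exact shuffle_append hAB (ih msr msr' (by simpa using h1) (by simpa using h2))

end MaxShAux

/-- Let μ, μ' be dominant words whose canonical factorizations use the distinct segments
`j^(1) > ⋯ > j^(s)` with multiplicities `m_1,…,m_s` and `m'_1,…,m'_s` respectively.
Then the lexicographically greatest shuffle of μ and μ' is the concatenation
`(j^(1))^{m_1+m'_1} ⋯ (j^(s))^{m_s+m'_s}`. -/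
theorem maxShuffle_of_dominant_words (n : ℕ) (hn : 1 ≤ n)
    (js : List (List ℕ)) (ms ms' : List ℕ)
    (hseg : ∀ w ∈ js, IsSegment n w)
    (hdec : List.Chain' (· > ·) js)
    (hlen : ms.length = js.length) (hlen' : ms'.length = js.length) :
    IsGreatest {w | IsShuffle (glueWord js ms) (glueWord js ms') w}
      (glueWord js (List.zipWith (· + ·) ms ms')) := by
  constructor
  · exact MaxShAux.mem_part js ms ms' hlen hlen'
  · intro w hw
    refine MaxShAux.bound ((glueWord js ms).length + (glueWord js ms').length + js.length)
      js ms ms' le_rfl ?_ ?_ hlen hlen' w hw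
    · intro w hwmem
      obtain ⟨k, l, _, hkl, _, he⟩ := hseg w hwmem
      exact ⟨k, l, hkl, he⟩
    · exact List.isChain_iff_pairwise.mp hdec
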